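/- Let n ≥ 2 and let X be a minimal subshift whose topological rank equals n (in particular, X has finite topological rank). Then X has finite symbolic rank; that is, there exist m ≥ 1 and an infinite word V with a rank-m construction such that X = X_V. -/

import Mathlib

namespace SubshiftRank

/-! ### Words over the alphabet {0,1}; `false` plays the role of `0`, `true` of `1`. -/

abbrev Word := List Bool

/-- `ℱ`: the set of finite nonempty words over `{0,1}` beginning and ending with `0`. -/
def FF : Set Word := {w | w ≠ [] ∧ w.head? = some false ∧ w.getLast? = some false}

/-- `spacer s = 1^s`. -/
def spacer (s : ℕ) : Word := List.replicate s true

/-- A building: a sequence of words `v₁, …, v_k` with spacers `s₁, …, s_k` (the `pairs`),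
followed by a final word `v_{k+1}` (the `last`).  The assembled word is
`v₁1^{s₁}v₂1^{s₂}⋯v_k1^{s_k}v_{k+1}`. -/
structure Building where
  pairs : List (Word × ℕ)
  last : Word

/-- The word assembled by a building. -/
def Building.word (b : Building) : Word :=
  b.pairs.foldr (fun p acc => p.1 ++ spacer p.2 ++ acc) b.last

/-- The words `v₁, …, v_{k+1}` used in a building (in order). -/
def Building.pieces (b : Building) : List Word := b.pairs.map Prod.fst ++ [b.last]

/-- `b` is a building from the set `S`: there is at least one spacer (i.e. `k ≥ 1`, at least
two pieces) and all the pieces belong to `S`. -/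
def Building.FromSet (b : Building) (S : Set Word) : Prop :=
  b.pairs ≠ [] ∧ ∀ v ∈ b.pieces, v ∈ S

/-- The first word of a building. -/
def Building.firstPiece (b : Building) : Word := b.pieces.headI

/-- Every word of `S` is used in the building. -/
def Building.UsesAll (b : Building) (S : Set Word) : Prop := ∀ v ∈ S, v ∈ b.pieces

/-- The spacer parameter of the building is bounded by `M`. -/
def Building.SpacersLE (b : Building) (M : ℕ) : Prop := ∀ p ∈ b.pairs, p.2 ≤ M

/-- `w` is built from `S`. -/
def BuiltFrom (w : Word) (S : Set Word) : Prop := ∃ b : Building, b.FromSet S ∧ b.word = w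

/-- The `i`-th level `S_i = {v_{i,1}, …, v_{i,n_i}}` of a generating sequence. -/
def levelSet (ni : ℕ → ℕ) (wd : ℕ → ℕ → Word) (i : ℕ) : Set Word :=
  {w | ∃ j, 1 ≤ j ∧ j ≤ ni i ∧ wd i j = w}

/-- A (symbolic) rank-`n` construction: a rank-`n` generating sequence `v_{i,j}`
(`i ≥ 0`, `1 ≤ j ≤ n_i ≤ n`) together with, for each `i` and `1 ≤ j ≤ n_{i+1}`, one chosen
building of `v_{i+1,j}` from `S_i`, the building of `v_{i+1,1}` starting with `v_{i,1}`. -/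
structure RankConstruction (n : ℕ) where
  ni : ℕ → ℕ
  wd : ℕ → ℕ → Word
  bld : ℕ → ℕ → Building
  ni_pos : ∀ i, 1 ≤ ni i
  ni_le : ∀ i, ni i ≤ n
  mem_FF : ∀ i j, 1 ≤ j → j ≤ ni i → wd i j ∈ FF
  wd_zero : ∀ j, 1 ≤ j → j ≤ ni 0 → wd 0 j = [false]
  bld_from : ∀ i j, 1 ≤ j → j ≤ ni (i + 1) → (bld i j).FromSet (levelSet ni wd i)
  bld_word : ∀ i j, 1 ≤ j → j ≤ ni (i + 1) → (bld i j).word = wd (i + 1) j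
  bld_start : ∀ i, (bld i 1).firstPiece = wd i 1

/-- A rank-`n` construction is proper if `n_i = n` for all `i` and every word of `S_i` is used
in each chosen building. -/
def RankConstruction.Proper {n : ℕ} (c : RankConstruction n) : Prop :=
  (∀ i, c.ni i = n) ∧
    ∀ i j, 1 ≤ j → j ≤ c.ni (i + 1) → (c.bld i j).UsesAll (levelSet c.ni c.wd i)

/-- All spacer parameters of all chosen buildings are bounded by `M`. -/
def RankConstruction.SpacersBoundedBy {n : ℕ} (c : RankConstruction n) (M : ℕ) : Prop :=
  ∀ i j, 1 ≤ j → j ≤ c.ni (i + 1) → (c.bld i j).SpacersLE M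

/-- The spacer parameter of the construction is bounded. -/
def RankConstruction.BoundedSpacer {n : ℕ} (c : RankConstruction n) : Prop :=
  ∃ M, c.SpacersBoundedBy M

/-- `w` is of the form `α1^{s₁}v_{j₁}1^{s₂}v_{j₂}⋯v_{j_{k−1}}1^{s_k}β` where `k ≥ 1`, the
middle words belong to `S`, `α` is a nonempty suffix of a word of `S` and `β` is a nonempty
prefix of a word of `S`. -/
def BadDecomp (w : Word) (S : Set Word) : Prop :=
  ∃ (α β : Word) (mids : List (ℕ × Word)) (sk : ℕ),
    α ≠ [] ∧ β ≠ [] ∧ (∃ a ∈ S, α <:+ a) ∧ (∃ b ∈ S, β <+: b) ∧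
    (∀ p ∈ mids, p.2 ∈ S) ∧
    w = α ++ mids.foldr (fun p acc => spacer p.1 ++ p.2 ++ acc) (spacer sk ++ β)

/-- A rank-`n` construction is good if it is proper and no `v_{i,j}` has a bad decomposition
over `S_i`. -/
def RankConstruction.Good {n : ℕ} (c : RankConstruction n) : Prop :=
  c.Proper ∧ ∀ i j, 1 ≤ j → j ≤ c.ni i → ¬ BadDecomp (c.wd i j) (levelSet c.ni c.wd i)

/-- The finite word `w` is a prefix (initial segment) of the infinite word `V`. -/
def InfExtends (V : ℕ → Bool) (w : Word) : Prop := ∀ k, k < w.length → w.getD k false = V k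

/-- `V = lim_i v_{i,1}` is the infinite word determined by the construction. -/
def RankConstruction.HasLimit {n : ℕ} (c : RankConstruction n) (V : ℕ → Bool) : Prop :=
  (∀ i, InfExtends V (c.wd i 1)) ∧ ∀ m : ℕ, ∃ i, m ≤ (c.wd i 1).length

/-- The infinite word `V` has a rank-`n` construction. -/
def HasRankConstr (V : ℕ → Bool) (n : ℕ) : Prop := ∃ c : RankConstruction n, c.HasLimit V

/-! ### Occurrences and subshifts -/

/-- The finite word `u` occurs in the infinite word `V` at position `p`. -/
def OccursAtInf (u : Word) (V : ℕ → Bool) (p : ℕ) : Prop :=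
  ∀ k, k < u.length → u.getD k false = V (p + k)

/-- `u` is a subword of the infinite word `V`. -/
def OccursInInf (u : Word) (V : ℕ → Bool) : Prop := ∃ p, OccursAtInf u V p

/-- The finite word `u` occurs in the bi-infinite word `x` at position `p`. -/
def OccursAtBi (u : Word) (x : ℤ → Bool) (p : ℤ) : Prop :=
  ∀ k : ℕ, k < u.length → u.getD k false = x (p + (k : ℤ))

/-- `u` is a subword of the bi-infinite word `x`. -/
def OccursInBi (u : Word) (x : ℤ → Bool) : Prop := ∃ p, OccursAtBi u x p

/-- The Bernoulli shift `σ` on `{0,1}^ℤ`. -/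
def shift (x : ℤ → Bool) : ℤ → Bool := fun k => x (k + 1)

/-- The subshift generated by the infinite word `V`. -/
def XV (V : ℕ → Bool) : Set (ℤ → Bool) := {x | ∀ u : Word, OccursInBi u x → OccursInInf u V}

/-- The `σ`-orbit of `x`. -/
def sorbit (x : ℤ → Bool) : Set (ℤ → Bool) := Set.range fun n : ℤ => fun k => x (k + n)

/-- A subshift: a nonempty closed shift-invariant subset of `{0,1}^ℤ`. -/
def IsSubshift (X : Set (ℤ → Bool)) : Prop := X.Nonempty ∧ IsClosed X ∧ shift '' X = X

/-- A minimal subshift: every orbit is dense. -/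
def MinimalSubshift (X : Set (ℤ → Bool)) : Prop :=
  IsSubshift X ∧ ∀ x ∈ X, X ⊆ closure (sorbit x)

/-- `X` has symbolic rank at most `n`. -/
def SymbRankLE (X : Set (ℤ → Bool)) (n : ℕ) : Prop := ∃ V, HasRankConstr V n ∧ X = XV V

/-- `X` has symbolic rank exactly `n`. -/
def SymbRankEq (X : Set (ℤ → Bool)) (n : ℕ) : Prop :=
  SymbRankLE X n ∧ ∀ m, SymbRankLE X m → n ≤ m

/-- `M` is a minimal subset of the system `(X, shift)`: a nonempty closed shift-invariant
subset of `X` with no proper nonempty closed shift-invariant subset. -/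
def IsMinimalSubsetOf (X M : Set (ℤ → Bool)) : Prop :=
  M.Nonempty ∧ IsClosed M ∧ M ⊆ X ∧ shift '' M = M ∧
    ∀ M', M' ⊆ M → M'.Nonempty → IsClosed M' → shift '' M' = M' → M' = M

/-- A bi-infinite word `x` is built from `v`: there is a strictly increasing bi-infinite
sequence of positions, with consecutive gaps at least `|v|` and unbounded in both directions,
at each of which `v` occurs, and `x` equals `1` outside those occurrences. -/
def BiBuiltFrom (x : ℤ → Bool) (v : Word) : Prop :=
  ∃ pos : ℤ → ℤ, StrictMono pos ∧
    (∀ i : ℤ, pos i + (v.length : ℤ) ≤ pos (i + 1)) ∧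
    (∀ n : ℤ, ∃ i : ℤ, n < pos i) ∧ (∀ n : ℤ, ∃ i : ℤ, pos i < n) ∧
    (∀ i : ℤ, OccursAtBi v x (pos i)) ∧
    (∀ p : ℤ, (∀ i : ℤ, ¬ (pos i ≤ p ∧ p < pos i + (v.length : ℤ))) → x p = true)

/-! ### General topological dynamics on (Cantor) metric spaces -/

/-- Every orbit of `T` is dense. -/
def MinimalHomeo {X : Type*} [TopologicalSpace X] (T : X ≃ₜ X) : Prop :=
  ∀ x : X, Dense (Set.range fun n : ℤ => (T.toEquiv ^ n) x)

/-- The system `(X, T)` is equicontinuous. -/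
def EquicontinuousSys {X : Type*} [MetricSpace X] (T : X ≃ₜ X) : Prop :=
  ∀ ε : ℝ, 0 < ε → ∃ δ : ℝ, 0 < δ ∧
    ∀ (n : ℤ) (x y : X), dist x y < δ → dist ((T.toEquiv ^ n) x) ((T.toEquiv ^ n) y) < ε

/-- `M` is a minimal set of `(X, T)`. -/
def IsMinimalSet {X : Type*} [TopologicalSpace X] (T : X → X) (M : Set X) : Prop :=
  M.Nonempty ∧ IsClosed M ∧ T '' M = M ∧
    ∀ M', M' ⊆ M → M'.Nonempty → IsClosed M' → T '' M' = M' → M' = M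

/-- `(X, T)` is essentially minimal: it has a unique minimal set. -/
def EssentiallyMinimal {X : Type*} [TopologicalSpace X] (T : X → X) : Prop :=
  ∃! M, IsMinimalSet T M

/-- `A` has the finite covering property: `⋃_{−N ≤ n ≤ N} T^n A = X` for some `N`. -/
def FiniteCovering {X : Type*} [TopologicalSpace X] (T : X ≃ₜ X) (A : Set X) : Prop :=
  ∃ N : ℕ, (⋃ n ∈ Finset.Icc (-(N : ℤ)) (N : ℤ), ⇑(T.toEquiv ^ n) '' A) = Set.univ

/-- A finite partition of the whole space into clopen sets. -/
def IsClopenPartition {X : Type*} [TopologicalSpace X] (Q : Finset (Set X)) : Prop :=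
  (∀ q ∈ Q, IsClopen q) ∧ (⋃ q ∈ Q, q) = Set.univ ∧
    ∀ q ∈ Q, ∀ q' ∈ Q, q ≠ q' → Disjoint q q'

/-- A Kakutani–Rohlin partition of `(X, T)`: clopen bases `B 0, …, B (d−1)` with heights
`h 0, …, h (d−1)` such that the sets `T^j (B k)` (`j < h k`) form a partition of `X` and
`⋃_k T^{h k} (B k) = ⋃_k B k`. -/
structure KRPart {X : Type*} [TopologicalSpace X] (T : X → X) where
  d : ℕ
  B : Fin d → Set X
  h : Fin d → ℕ
  d_pos : 0 < d
  h_pos : ∀ k, 0 < h k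
  clopen : ∀ k, IsClopen (B k)
  disj : ∀ (k k' : Fin d) (j j' : ℕ), j < h k → j' < h k' → (k, j) ≠ (k', j') →
    Disjoint (T^[j] '' B k) (T^[j'] '' B k')
  cover : (⋃ k, ⋃ j ∈ Finset.range (h k), T^[j] '' B k) = Set.univ
  base_eq : (⋃ k, T^[h k] '' B k) = ⋃ k, B k

/-- The base of a Kakutani–Rohlin partition. -/
def KRPart.base {X : Type*} [TopologicalSpace X] {T : X → X} (P : KRPart T) : Set X :=
  ⋃ k, P.B k

/-- `(X, T)` has topological rank at most `m` (Kakutani–Rohlin characterization). -/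
def TopRankLEGen {X : Type*} [MetricSpace X] (T : X → X) (m : ℕ) : Prop :=
  ∃ x : X, ∀ ε : ℝ, 0 < ε → ∃ P : KRPart T, P.d ≤ m ∧
    (∀ (k : Fin P.d) (j : ℕ), j < P.h k → Metric.diam (T^[j] '' P.B k) < ε) ∧
    Metric.diam P.base < ε ∧ x ∈ P.base

/-! ### Kakutani–Rohlin partitions and topological rank for subshifts -/

/-- A Kakutani–Rohlin partition of the subshift `(X, σ)`. -/
structure KRPartOn (X : Set (ℤ → Bool)) where
  d : ℕ
  B : Fin d → Set (ℤ → Bool)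
  h : Fin d → ℕ
  d_pos : 0 < d
  h_pos : ∀ k, 0 < h k
  subset : ∀ k, B k ⊆ X
  clopen : ∀ k, IsClopen {y : X | (y : ℤ → Bool) ∈ B k}
  disj : ∀ (k k' : Fin d) (j j' : ℕ), j < h k → j' < h k' → (k, j) ≠ (k', j') →
    Disjoint (shift^[j] '' B k) (shift^[j'] '' B k')
  cover : (⋃ k, ⋃ j ∈ Finset.range (h k), shift^[j] '' B k) = X
  base_eq : (⋃ k, shift^[h k] '' B k) = ⋃ k, B k

/-- The base of a Kakutani–Rohlin partition of a subshift. -/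
def KRPartOn.base {X : Set (ℤ → Bool)} (P : KRPartOn X) : Set (ℤ → Bool) := ⋃ k, P.B k

/-- All elements of `A` agree on the window `[−N, N]`; for the canonical metric on `2^ℤ`
this says exactly that `diam(A) ≤ 2^{−N}`. -/
def AgreeOn (N : ℕ) (A : Set (ℤ → Bool)) : Prop :=
  ∀ y ∈ A, ∀ z ∈ A, ∀ k : ℤ, |k| ≤ (N : ℤ) → y k = z k

/-- The subshift `(X, σ)` has topological rank at most `m` (Kakutani–Rohlin
characterization, with smallness of diameters expressed by agreement on windows,
matching the canonical compatible metric on `2^ℤ`). -/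
def TopRankLE (X : Set (ℤ → Bool)) (m : ℕ) : Prop :=
  ∃ x ∈ X, ∀ N : ℕ, ∃ P : KRPartOn X, P.d ≤ m ∧
    (∀ (k : Fin P.d) (j : ℕ), j < P.h k → AgreeOn N (shift^[j] '' P.B k)) ∧
    AgreeOn N P.base ∧ x ∈ P.base

/-! ### Factor maps and conjugacy -/

/-- `φ` is a (topological) factor map from the subshift `Y` onto the subshift `X`. -/
def IsFactorMapOn (Y X : Set (ℤ → Bool)) (φ : (ℤ → Bool) → (ℤ → Bool)) : Prop :=
  ContinuousOn φ Y ∧ φ '' Y = X ∧ ∀ y ∈ Y, φ (shift y) = shift (φ y)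

/-- `X` is a topological factor of `Y`. -/
def SubshiftFactor (Y X : Set (ℤ → Bool)) : Prop := ∃ φ, IsFactorMapOn Y X φ

/-- The subshifts `Y` and `X` are conjugate. -/
def SubshiftConjugate (Y X : Set (ℤ → Bool)) : Prop :=
  ∃ φ, IsFactorMapOn Y X φ ∧ Set.InjOn φ Y

/-- `(X, T)` is conjugate to the subshift `(Y, σ)`. -/
def ConjugateToSubshift {X : Type*} [TopologicalSpace X] (T : X ≃ₜ X) (Y : Set (ℤ → Bool)) :
    Prop :=
  ∃ φ : X → (ℤ → Bool), Continuous φ ∧ Function.Injective φ ∧ Set.range φ = Y ∧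
    ∀ x, φ (T x) = shift (φ x)

/-- The Boolean algebra of sets generated by `G`. -/
inductive GenBoolAlg {X : Type*} (G : Set (Set X)) : Set X → Prop
  | basic (A : Set X) : A ∈ G → GenBoolAlg G A
  | empty : GenBoolAlg G ∅
  | compl (A : Set X) : GenBoolAlg G A → GenBoolAlg G Aᶜ
  | union (A B : Set X) : GenBoolAlg G A → GenBoolAlg G B → GenBoolAlg G (A ∪ B)

/-- `(T, A)` is generating: the smallest Boolean algebra containing all `T^n A` contains
every clopen set. -/
def Generating {X : Type*} [TopologicalSpace X] (T : X ≃ₜ X) (A : Set X) : Prop :=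
  ∀ U : Set X, IsClopen U → GenBoolAlg {B : Set X | ∃ n : ℤ, B = ⇑(T.toEquiv ^ n) '' A} U

/-- The return-times word `Ret_A(x₀) ∈ 2^ℤ` of `x₀` to `A`. -/
noncomputable def retWord {X : Type*} [TopologicalSpace X] (T : X ≃ₜ X) (A : Set X) (x₀ : X) : ℤ → Bool :=
  fun n => @ite _ ((T.toEquiv ^ n) x₀ ∈ A) (Classical.propDecidable _) true false


/-! ### Auxiliary development for statement_18 -/

section Aux18

open Classical

/-- Shift by an arbitrary integer. -/
def sh (t : ℤ) (y : ℤ → Bool) : ℤ → Bool := fun k => y (k + t)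

@[simp] lemma sh_apply (t k : ℤ) (y : ℤ → Bool) : sh t y k = y (k + t) := rfl

lemma sh_sh (a b : ℤ) (y : ℤ → Bool) : sh a (sh b y) = sh (a + b) y := by
  funext k; simp [sh, add_assoc]

@[simp] lemma sh_zero (y : ℤ → Bool) : sh 0 y = y := by funext k; simp [sh]

lemma shift_eq_sh (y : ℤ → Bool) : shift y = sh 1 y := rfl

lemma shift_iterate_eq (j : ℕ) (y : ℤ → Bool) : shift^[j] y = sh (j : ℤ) y := by
  induction j with
  | zero => simp
  | succ j ih =>
    rw [Function.iterate_succ_apply', ih, shift_eq_sh, sh_sh, add_comm]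
    norm_num

/-- The finite segment `y[a], y[a+1], …, y[a+len-1]` as a word. -/
def seg (y : ℤ → Bool) (a : ℤ) (len : ℕ) : Word :=
  (List.range len).map fun r : ℕ => y (a + (r : ℤ))

@[simp] lemma seg_length (y : ℤ → Bool) (a : ℤ) (len : ℕ) : (seg y a len).length = len := by
  simp [seg]

lemma seg_getD {k len : ℕ} (y : ℤ → Bool) (a : ℤ) (h : k < len) :
    (seg y a len).getD k false = y (a + (k : ℤ)) := by
  simp [seg, List.getD_eq_getElem?_getD, List.getElem?_map, List.getElem?_range h]

lemma seg_append (y : ℤ → Bool) (a : ℤ) (m k : ℕ) :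
    seg y a m ++ seg y (a + (m : ℤ)) k = seg y a (m + k) := by
  simp only [seg, List.range_add, List.map_append, List.map_map]
  congr 1
  apply List.map_congr_left
  intro r _
  simp only [Function.comp_apply]
  congr 1
  push_cast
  ring

lemma seg_ne_nil (y : ℤ → Bool) (a : ℤ) (len : ℕ) (h : 0 < len) : seg y a len ≠ [] := by
  intro hc
  have := congrArg List.length hc
  simp at this
  omega

lemma seg_head? (y : ℤ → Bool) (a : ℤ) (len : ℕ) (h : 0 < len) :
    (seg y a len).head? = some (y a) := by
  obtain ⟨m, rfl⟩ : ∃ m, len = m + 1 := ⟨len - 1, by omega⟩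
  have : List.range (m + 1) = 0 :: (List.range m).map (fun x => 1 + x) := by
    rw [show m + 1 = 1 + m by omega, List.range_add]
    simp [List.range_succ_eq_map]
  simp [seg, this]

lemma seg_getLast? (y : ℤ → Bool) (a : ℤ) (m : ℕ) :
    (seg y a (m + 1)).getLast? = some (y (a + (m : ℤ))) := by
  rw [List.getLast?_eq_getElem?]
  simp [List.getElem?_map, List.getElem?_range (Nat.lt_succ_self m), seg]

lemma seg_all_true (y : ℤ → Bool) (a : ℤ) (len : ℕ)
    (h : ∀ r : ℕ, r < len → y (a + (r : ℤ)) = true) : seg y a len = spacer len := by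
  rw [spacer, List.eq_replicate_iff]
  constructor
  · simp
  · intro b hb
    simp only [seg, List.mem_map, List.mem_range] at hb
    obtain ⟨r, hr, rfl⟩ := hb
    exact h r hr

lemma seg_mem_FF (y : ℤ → Bool) (a : ℤ) (m : ℕ) (h0 : y a = false)
    (h1 : y (a + (m : ℤ)) = false) : seg y a (m + 1) ∈ FF :=
  ⟨seg_ne_nil y a _ (Nat.succ_pos m), by rw [seg_head? y a _ (Nat.succ_pos m), h0],
    by rw [seg_getLast?, h1]⟩

/-- Every word of `FF` can be built from `{[false]}`. -/
lemma build_from_false : ∀ (L : ℕ) (w : Word), w.length ≤ L → w ∈ FF →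
    ∃ b : Building, (∀ v ∈ b.pieces, v = [false]) ∧ b.word = w ∧
      b.firstPiece = [false] ∧ (w ≠ [false] → b.pairs ≠ []) := by
  intro L
  induction L with
  | zero =>
    intro w hw hFF
    exact absurd (List.length_eq_zero_iff.1 (Nat.le_zero.1 hw)) hFF.1
  | succ L ih =>
    intro w hw hFF
    obtain ⟨hne, hhead, hlast⟩ := hFF
    obtain ⟨c, t, rfl⟩ : ∃ c t, w = c :: t := ⟨w.head hne, w.tail, (List.cons_head_tail hne).symm⟩
    have hc : c = false := by simpa using hhead
    subst hc
    rcases eq_or_ne t [] with rfl | htne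
    · refine ⟨⟨[], [false]⟩, ?_, rfl, rfl, fun h => absurd rfl h⟩
      intro v hv
      simpa [Building.pieces] using hv
    · -- t ≠ []
      have hlt : t.getLast? = some false := by
        have h0 : ((false :: t) : Word) = [false] ++ t := rfl
        rw [h0, List.getLast?_append] at hlast
        cases hgl : t.getLast? with
        | none => rw [List.getLast?_eq_none_iff] at hgl; exact absurd hgl htne
        | some b => rw [hgl] at hlast; simpa using hlast
      set tw := t.takeWhile id with htw
      set w' := t.dropWhile id with hw'
      have htsplit : tw ++ w' = t := List.takeWhile_append_dropWhile (p := id) (l := t)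
      have hw'ne : w' ≠ [] := by
        intro hnil
        have htall : t = tw := by rw [← htsplit, hnil, List.append_nil]
        have hmem : false ∈ t := by
          obtain ⟨h', heq⟩ := List.mem_getLast?_eq_getLast hlt
          rw [heq]
          exact List.getLast_mem h'
        rw [htall] at hmem
        have := List.mem_takeWhile_imp hmem
        simp at this
      have hw'head : w'.head? = some false := by
        rw [List.head?_eq_head hw'ne]
        have := List.head_dropWhile_not id (l := t) hw'ne
        simpa using this
      have hw'last : w'.getLast? = some false := by
        rw [← htsplit, List.getLast?_append] at hlt
        cases hgl : w'.getLast? with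
        | none => rw [List.getLast?_eq_none_iff] at hgl; exact absurd hgl hw'ne
        | some b => rw [hgl] at hlt; simpa using hlt
      have hw'FF : w' ∈ FF := ⟨hw'ne, hw'head, hw'last⟩
      have hlen : w'.length ≤ L := by
        have h1 : t.length ≤ L := by simpa using hw
        have h2 : tw.length + w'.length = t.length := by
          rw [← htsplit]; simp
        omega
      obtain ⟨b', hb'p, hb'w, hb'f, _⟩ := ih w' hlen hw'FF
      refine ⟨⟨([false], tw.length) :: b'.pairs, b'.last⟩, ?_, ?_, ?_, fun _ => by simp⟩
      · intro v hv
        simp only [Building.pieces, List.map_cons, List.cons_append, List.mem_cons] at hv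
        rcases hv with rfl | hv
        · rfl
        · exact hb'p v (by simpa [Building.pieces] using hv)
      · show [false] ++ spacer tw.length ++ b'.word = false :: t
        have hsp : spacer tw.length = tw := by
          rw [spacer, eq_comm, List.eq_replicate_iff]
          exact ⟨rfl, fun b hb => by simpa using List.mem_takeWhile_imp hb⟩
        rw [hsp, hb'w, ← htsplit]
        simp
      · simp [Building.firstPiece, Building.pieces]

/-! ### Topological lemmas -/

lemma isOpen_coordEq (c : ℤ) (b : Bool) : IsOpen {z : ℤ → Bool | z c = b} := by
  have : {z : ℤ → Bool | z c = b} = (fun z : ℤ → Bool => z c) ⁻¹' {b} := rfl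
  rw [this]
  exact (isOpen_discrete _).preimage (continuous_apply _)

lemma isOpen_eqOnFinset (s : Finset ℤ) (y : ℤ → Bool) :
    IsOpen {z : ℤ → Bool | ∀ k ∈ s, z k = y k} := by
  have : {z : ℤ → Bool | ∀ k ∈ s, z k = y k} = ⋂ k ∈ s, {z : ℤ → Bool | z k = y k} := by
    ext z; simp
  rw [this]
  exact isOpen_biInter_finset fun k _ => isOpen_coordEq k (y k)

lemma sh_mem_of_subshift {X : Set (ℤ → Bool)} (hX : IsSubshift X) :
    ∀ (t : ℤ) (y : ℤ → Bool), y ∈ X → sh t y ∈ X := by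
  have h1 : ∀ y ∈ X, sh 1 y ∈ X := by
    intro y hy
    rw [← shift_eq_sh, ← hX.2.2]
    exact ⟨y, hy, rfl⟩
  have hm1 : ∀ y ∈ X, sh (-1) y ∈ X := by
    intro y hy
    rw [← hX.2.2] at hy
    obtain ⟨z, hz, rfl⟩ := hy
    have : sh (-1) (shift z) = z := by funext k; simp [sh, shift]
    rwa [this]
  intro t
  induction t using Int.induction_on with
  | zero => intro y hy; simpa using hy
  | succ i ih =>
    intro y hy
    have := h1 _ (ih y hy)
    rwa [sh_sh, add_comm] at this
  | pred i ih =>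
    intro y hy
    have := hm1 _ (ih y hy)
    rwa [sh_sh, show (-1 : ℤ) + -(i : ℤ) = -(i : ℤ) - 1 by ring] at this

lemma mem_of_approx {X : Set (ℤ → Bool)} (hcl : IsClosed X) (z : ℤ → Bool)
    (h : ∀ N : ℕ, ∃ y ∈ X, ∀ k : ℤ, |k| ≤ (N : ℤ) → y k = z k) : z ∈ X := by
  choose y hyX hy using h
  have htd : Filter.Tendsto y Filter.atTop (nhds z) := by
    rw [tendsto_pi_nhds]
    intro k
    have hev : (fun N => y N k) =ᶠ[Filter.atTop] fun _ => z k := by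
      filter_upwards [Filter.eventually_ge_atTop k.natAbs] with N hN
      apply hy N k
      rw [Int.abs_eq_natAbs]
      exact_mod_cast hN
    rw [Filter.tendsto_congr' hev]
    exact tendsto_const_nhds
  exact hcl.mem_of_tendsto htd (Filter.Eventually.of_forall hyX)

lemma isOpen_occursAt (u : Word) (q : ℤ) : IsOpen {w : ℤ → Bool | OccursAtBi u w q} := by
  have : {w : ℤ → Bool | OccursAtBi u w q} =
      ⋂ k ∈ Finset.range u.length, {w : ℤ → Bool | w (q + (k : ℤ)) = u.getD k false} := by
    ext w
    simp [OccursAtBi, eq_comm]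
  rw [this]
  exact isOpen_biInter_finset fun k _ => isOpen_coordEq _ _

lemma occurs_everywhere {X : Set (ℤ → Bool)} (hmin : MinimalSubshift X) (u : Word)
    (y₀ : ℤ → Bool) (hy₀ : y₀ ∈ X) (p₀ : ℤ) (hocc : OccursAtBi u y₀ p₀) :
    ∀ z ∈ X, ∃ q : ℤ, OccursAtBi u z q := by
  intro z hz
  have hy₀cl : y₀ ∈ closure (sorbit z) := hmin.2 z hz hy₀
  have hU : IsOpen {w : ℤ → Bool | OccursAtBi u w p₀} := isOpen_occursAt u p₀
  rw [mem_closure_iff] at hy₀cl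
  obtain ⟨w, hwU, hworb⟩ := hy₀cl _ hU hocc
  obtain ⟨m, rfl⟩ := hworb
  refine ⟨p₀ + m, fun k hk => ?_⟩
  have h2 := hwU k hk
  simp only at h2
  rw [h2]
  congr 1
  ring

lemma uniform_occurrence {X : Set (ℤ → Bool)} (hmin : MinimalSubshift X) (u : Word)
    (y₀ : ℤ → Bool) (hy₀ : y₀ ∈ X) (p₀ : ℤ) (hocc : OccursAtBi u y₀ p₀) :
    ∃ K : ℕ, ∀ z ∈ X, ∃ q : ℤ, |q| ≤ (K : ℤ) ∧ OccursAtBi u z q := by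
  have hXcpt : IsCompact X := hmin.1.2.1.isCompact
  set Ucov : ℕ → Set (ℤ → Bool) :=
    fun K => ⋃ q ∈ Finset.Icc (-(K : ℤ)) (K : ℤ), {w : ℤ → Bool | OccursAtBi u w q} with hUcov
  have hUopen : ∀ K, IsOpen (Ucov K) := by
    intro K
    apply isOpen_biUnion
    intro q _
    exact isOpen_occursAt u q
  have hcover : X ⊆ ⋃ K : ℕ, Ucov K := by
    intro z hz
    obtain ⟨q, hq⟩ := occurs_everywhere hmin u y₀ hy₀ p₀ hocc z hz
    refine Set.mem_iUnion.2 ⟨q.natAbs, ?_⟩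
    apply Set.mem_biUnion _ hq
    refine Finset.mem_Icc.2 ⟨?_, ?_⟩ <;> omega
  obtain ⟨t, ht⟩ := hXcpt.elim_finite_subcover Ucov hUopen hcover
  refine ⟨t.sup id, ?_⟩
  intro z hz
  obtain ⟨K, hKt, hzK⟩ := Set.mem_iUnion₂.1 (ht hz)
  obtain ⟨q, hq, hqocc⟩ := Set.mem_iUnion₂.1 hzK
  refine ⟨q, ?_, hqocc⟩
  simp only [Finset.mem_Icc] at hq
  have : K ≤ t.sup id := Finset.le_sup (f := id) hKt
  rw [abs_le]
  omega

lemma exists_window {X : Set (ℤ → Bool)} (P : KRPartOn X) (x : ℤ → Bool) (hx : x ∈ X)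
    (hxb : x ∈ P.base) :
    ∃ W : ℕ, ∀ y ∈ X, (∀ k : ℤ, |k| ≤ (W : ℤ) → y k = x k) → y ∈ P.base := by
  have hSopen : IsOpen {y : X | (y : ℤ → Bool) ∈ P.base} := by
    have : {y : X | (y : ℤ → Bool) ∈ P.base} = ⋃ k, {y : X | (y : ℤ → Bool) ∈ P.B k} := by
      ext y; simp [KRPartOn.base]
    rw [this]
    exact isOpen_iUnion fun k => (P.clopen k).2
  rw [isOpen_induced_iff] at hSopen
  obtain ⟨U, hUopen, hUeq⟩ := hSopen
  have hxU : x ∈ U := by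
    have : (⟨x, hx⟩ : X) ∈ Subtype.val ⁻¹' U := by rw [hUeq]; exact hxb
    exact this
  obtain ⟨I, uu, hIu, hIsub⟩ := isOpen_pi_iff.1 hUopen x hxU
  refine ⟨I.sup Int.natAbs, ?_⟩
  intro y hy hagree
  have hyU : y ∈ U := by
    apply hIsub
    intro a ha
    have h1 : a.natAbs ≤ I.sup Int.natAbs := Finset.le_sup (f := Int.natAbs) ha
    have h2 : y a = x a := by
      apply hagree
      rw [Int.abs_eq_natAbs]
      exact_mod_cast h1
    rw [h2]
    exact (hIu a ha).2
  have : (⟨y, hy⟩ : X) ∈ Subtype.val ⁻¹' U := hyU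
  rw [hUeq] at this
  exact this

/-! ### Periodic points give topological rank 1 -/

lemma shift_iterate_image_singleton (j : ℕ) (y : ℤ → Bool) :
    shift^[j] '' ({y} : Set (ℤ → Bool)) = {sh (j : ℤ) y} := by
  rw [Set.image_singleton, shift_iterate_eq]

lemma periodic_topRankLE_one {X : Set (ℤ → Bool)} (hmin : MinimalSubshift X)
    (x : ℤ → Bool) (hx : x ∈ X) (p₀ : ℕ) (hp : 1 ≤ p₀)
    (hper : ∀ s : ℤ, x s = x (s + (p₀ : ℤ)))
    (hminper : ∀ q : ℕ, 1 ≤ q → q < p₀ → ∃ s : ℤ, x s ≠ x (s + (q : ℤ))) :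
    TopRankLE X 1 := by
  have per_mul : ∀ (q : ℤ) (s : ℤ), x (s + (p₀ : ℤ) * q) = x s := by
    intro q
    induction q using Int.induction_on with
    | zero => intro s; simp
    | succ i ih =>
      intro s
      have h1 : s + (p₀ : ℤ) * ((i : ℤ) + 1) = (s + (p₀ : ℤ) * i) + p₀ := by ring
      rw [h1, ← hper (s + (p₀ : ℤ) * i), ih]
    | pred i ih =>
      intro s
      have h1 : s + (p₀ : ℤ) * (-(i : ℤ) - 1) = (s + (p₀ : ℤ) * (-(i : ℤ))) - p₀ := by ring
      rw [h1]
      have h2 := hper (s + (p₀ : ℤ) * (-(i : ℤ)) - p₀)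
      rw [sub_add_cancel] at h2
      rw [h2, ih]
  have sh_mod : ∀ m : ℤ, sh m x = sh (m % (p₀ : ℤ)) x := by
    intro m
    funext k
    simp only [sh_apply]
    have h1 : k + m = (k + m % (p₀ : ℤ)) + (p₀ : ℤ) * (m / (p₀ : ℤ)) := by
      have := Int.mul_ediv_add_emod m (p₀ : ℤ)
      linarith
    rw [h1, per_mul]
  set O : Set (ℤ → Bool) := ⋃ j ∈ Finset.range p₀, {sh (j : ℤ) x} with hO
  have hOfin : O.Finite := Set.Finite.biUnion (Finset.finite_toSet _)
    (fun j _ => Set.finite_singleton _)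
  have hOX : O ⊆ X := by
    intro y hy
    simp only [hO, Set.mem_iUnion, Set.mem_singleton_iff] at hy
    obtain ⟨j, _, rfl⟩ := hy
    exact sh_mem_of_subshift hmin.1 _ x hx
  have hsorb : sorbit x ⊆ O := by
    rintro y ⟨m, rfl⟩
    have h1 : ((fun n : ℤ => fun k : ℤ => x (k + n)) m) = sh m x := rfl
    rw [h1, sh_mod m]
    have h2 : 0 ≤ m % (p₀ : ℤ) := Int.emod_nonneg m (by positivity)
    have h3 : m % (p₀ : ℤ) < p₀ := Int.emod_lt_of_pos m (by exact_mod_cast hp)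
    simp only [hO, Set.mem_iUnion, Set.mem_singleton_iff]
    refine ⟨(m % (p₀ : ℤ)).toNat, ?_, ?_⟩
    · rw [Finset.mem_range, ← Nat.cast_lt (α := ℤ), Int.toNat_of_nonneg h2]
      exact h3
    · exact congrArg (fun t => sh t x) (Int.toNat_of_nonneg h2).symm
  have hXO : X ⊆ O := fun y hy =>
    closure_minimal hsorb hOfin.isClosed (hmin.2 x hx hy)
  have hOeqX : O = X := Set.Subset.antisymm hOX hXO
  have hsh_ne : ∀ j j' : ℕ, j < j' → j' < p₀ → sh (j : ℤ) x ≠ sh (j' : ℤ) x := by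
    intro j j' hjj hj' heq
    obtain ⟨s, hs⟩ := hminper (j' - j) (by omega) (by omega)
    apply hs
    have h1 : x (s - j + j) = x (s - j + j') := congrFun heq (s - (j : ℤ))
    have h2 : s - (j : ℤ) + j = s := by ring
    have h3 : s - (j : ℤ) + j' = s + ((j' - j : ℕ) : ℤ) := by push_cast; omega
    rw [h2, h3] at h1
    exact h1
  have hshp : sh (p₀ : ℤ) x = x := by
    funext k
    exact (hper k).symm
  have hclopen : ∀ k : Fin 1, IsClopen {y : X | (y : ℤ → Bool) ∈ ({x} : Set (ℤ → Bool))} := by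
    intro k
    constructor
    · exact isClosed_singleton.preimage continuous_subtype_val
    · rw [← isClosed_compl_iff]
      have hcompl : {y : X | (y : ℤ → Bool) ∈ ({x} : Set (ℤ → Bool))}ᶜ =
          Subtype.val ⁻¹' (O \ {x}) := by
        ext y
        simp only [Set.mem_compl_iff, Set.mem_setOf_eq, Set.mem_singleton_iff,
          Set.mem_preimage, Set.mem_diff]
        exact ⟨fun hne => ⟨hXO y.2, hne⟩, fun h => h.2⟩
      rw [hcompl]
      exact hOfin.diff.isClosed.preimage continuous_subtype_val
  have hdisj : ∀ (k k' : Fin 1) (j j' : ℕ), j < p₀ → j' < p₀ → (k, j) ≠ (k', j') →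
      Disjoint (shift^[j] '' ({x} : Set (ℤ → Bool))) (shift^[j'] '' ({x} : Set (ℤ → Bool))) := by
    intro k k' j j' hj hj' hne
    have hkk : k = k' := Subsingleton.elim k k'
    subst hkk
    have hjj : j ≠ j' := fun h => hne (by rw [h])
    rw [shift_iterate_image_singleton, shift_iterate_image_singleton,
      Set.disjoint_singleton]
    rcases lt_or_gt_of_ne hjj with h | h
    · exact hsh_ne j j' h hj'
    · exact fun heq => hsh_ne j' j h hj heq.symm
  have hcover : (⋃ k : Fin 1, ⋃ j ∈ Finset.range p₀, shift^[j] '' ({x} : Set (ℤ → Bool))) = X := by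
    have h1 : (⋃ k : Fin 1, ⋃ j ∈ Finset.range p₀, shift^[j] '' ({x} : Set (ℤ → Bool))) = O := by
      simp only [Set.iUnion_const, hO]
      exact Set.iUnion₂_congr fun j _ => shift_iterate_image_singleton j x
    rw [h1, hOeqX]
  have hbase_eq : (⋃ k : Fin 1, shift^[p₀] '' ({x} : Set (ℤ → Bool))) =
      ⋃ k : Fin 1, ({x} : Set (ℤ → Bool)) := by
    apply Set.iUnion_congr
    intro k
    rw [shift_iterate_image_singleton, hshp]
  refine ⟨x, hx, fun N => ?_⟩
  refine ⟨⟨1, fun _ => {x}, fun _ => p₀, one_pos, fun _ => hp,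
    fun _ => by simpa using hx, hclopen, hdisj, hcover, hbase_eq⟩, le_refl 1, ?_, ?_, ?_⟩
  · -- levels agree
    intro k j hj y hy z hz kk _
    have hy' : y ∈ shift^[j] '' ({x} : Set (ℤ → Bool)) := hy
    have hz' : z ∈ shift^[j] '' ({x} : Set (ℤ → Bool)) := hz
    rw [shift_iterate_image_singleton, Set.mem_singleton_iff] at hy' hz'
    rw [hy', hz']
  · -- base agrees
    intro y hy z hz kk _
    have hy' : y ∈ ⋃ k : Fin 1, ({x} : Set (ℤ → Bool)) := hy
    have hz' : z ∈ ⋃ k : Fin 1, ({x} : Set (ℤ → Bool)) := hz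
    simp only [Set.iUnion_const, Set.mem_singleton_iff] at hy' hz'
    rw [hy', hz']
  · -- x in base
    exact Set.mem_iUnion.2 ⟨0, rfl⟩

lemma aperiodic_of_rank {X : Set (ℤ → Bool)} (hmin : MinimalSubshift X) (n : ℕ) (hn : 2 ≤ n)
    (hr2 : ∀ m : ℕ, TopRankLE X m → n ≤ m) (x : ℤ → Bool) (hx : x ∈ X) :
    ∀ p : ℕ, 1 ≤ p → ∃ s : ℤ, x s ≠ x (s + (p : ℤ)) := by
  by_contra hcon
  push_neg at hcon
  obtain ⟨p, hp1, hper⟩ := hcon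
  classical
  have hEx : ∃ q : ℕ, 1 ≤ q ∧ ∀ s : ℤ, x s = x (s + (q : ℤ)) := ⟨p, hp1, fun s => hper s⟩
  set p₀ := Nat.find hEx with hp₀def
  obtain ⟨hp₀1, hp₀per⟩ := Nat.find_spec hEx
  have hminper : ∀ q : ℕ, 1 ≤ q → q < p₀ → ∃ s : ℤ, x s ≠ x (s + (q : ℤ)) := by
    intro q hq1 hqlt
    have := Nat.find_min hEx hqlt
    push_neg at this
    exact this hq1
  have h1 := hr2 1 (periodic_topRankLE_one hmin x hx p₀ hp₀1 hp₀per hminper)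
  omega

/-! ### Return times of a Kakutani–Rohlin partition along the orbit of `x` -/

/-- Return times of `x` to the base of `P`. -/
def RetSet {X : Set (ℤ → Bool)} (x : ℤ → Bool) (P : KRPartOn X) : Set ℤ :=
  {t : ℤ | sh t x ∈ P.base}

/-- The tower that `sh t x` sits at the base of. -/
noncomputable def towerIdx {X : Set (ℤ → Bool)} (x : ℤ → Bool) (P : KRPartOn X) (t : ℤ) :
    Fin P.d :=
  if h : ∃ k, sh t x ∈ P.B k then h.choose else ⟨0, P.d_pos⟩

/-- Height of the current tower: the gap until the next return. -/
noncomputable def gapAt {X : Set (ℤ → Bool)} (x : ℤ → Bool) (P : KRPartOn X) (t : ℤ) : ℕ :=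
  P.h (towerIdx x P t)

/-- The next return time. -/
noncomputable def nxtR {X : Set (ℤ → Bool)} (x : ℤ → Bool) (P : KRPartOn X) (t : ℤ) : ℤ :=
  t + gapAt x P t

lemma mem_B_towerIdx {X : Set (ℤ → Bool)} (x : ℤ → Bool) (P : KRPartOn X) {t : ℤ}
    (ht : t ∈ RetSet x P) : sh t x ∈ P.B (towerIdx x P t) := by
  have hex : ∃ k, sh t x ∈ P.B k := Set.mem_iUnion.1 ht
  rw [towerIdx, dif_pos hex]
  exact hex.choose_spec

lemma sh_mem_level {X : Set (ℤ → Bool)} (x : ℤ → Bool) (P : KRPartOn X) {t : ℤ} {k : Fin P.d}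
    (h : sh t x ∈ P.B k) (j : ℕ) : sh (t + (j : ℤ)) x ∈ shift^[j] '' P.B k := by
  refine ⟨sh t x, h, ?_⟩
  rw [shift_iterate_eq, sh_sh, add_comm]

lemma towerIdx_eq {X : Set (ℤ → Bool)} (x : ℤ → Bool) (P : KRPartOn X) {t : ℤ} {k : Fin P.d}
    (h : sh t x ∈ P.B k) : towerIdx x P t = k := by
  by_contra hne
  have h0 : sh t x ∈ P.B (towerIdx x P t) :=
    mem_B_towerIdx x P (Set.mem_iUnion.2 ⟨k, h⟩)
  have hd := P.disj (towerIdx x P t) k 0 0 (P.h_pos _) (P.h_pos _)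
    (by simp [Prod.ext_iff, hne])
  simp only [Function.iterate_zero, Set.image_id] at hd
  exact Set.disjoint_left.1 hd h0 h

lemma gapAt_pos {X : Set (ℤ → Bool)} (x : ℤ → Bool) (P : KRPartOn X) (t : ℤ) :
    0 < gapAt x P t := P.h_pos _

lemma nxtR_mem {X : Set (ℤ → Bool)} (x : ℤ → Bool) (P : KRPartOn X) {t : ℤ}
    (ht : t ∈ RetSet x P) : nxtR x P t ∈ RetSet x P := by
  have h1 : sh (t + (gapAt x P t : ℤ)) x ∈ shift^[gapAt x P t] '' P.B (towerIdx x P t) :=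
    sh_mem_level x P (mem_B_towerIdx x P ht) _
  have h2 : sh (t + (gapAt x P t : ℤ)) x ∈ ⋃ k, shift^[P.h k] '' P.B k :=
    Set.mem_iUnion.2 ⟨towerIdx x P t, h1⟩
  rw [P.base_eq] at h2
  exact h2

lemma not_ret_between {X : Set (ℤ → Bool)} (x : ℤ → Bool) (P : KRPartOn X) {t : ℤ}
    (ht : t ∈ RetSet x P) {j : ℕ} (h0 : 0 < j) (hj : j < gapAt x P t) :
    (t + (j : ℤ)) ∉ RetSet x P := by
  intro hmem
  obtain ⟨k', hk'⟩ := Set.mem_iUnion.1 hmem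
  have h1 : sh (t + (j : ℤ)) x ∈ shift^[j] '' P.B (towerIdx x P t) :=
    sh_mem_level x P (mem_B_towerIdx x P ht) _
  have hd := P.disj (towerIdx x P t) k' j 0 hj (P.h_pos _)
    (by simp [Prod.ext_iff]; omega)
  have h2 : sh (t + (j : ℤ)) x ∈ shift^[0] '' P.B k' := by
    simpa using hk'
  exact Set.disjoint_left.1 hd h1 h2

lemma nxtR_le {X : Set (ℤ → Bool)} (x : ℤ → Bool) (P : KRPartOn X) {t t' : ℤ}
    (ht : t ∈ RetSet x P) (ht' : t' ∈ RetSet x P) (hlt : t < t') : nxtR x P t ≤ t' := by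
  by_contra hcon
  push_neg at hcon
  have hj : t' = t + ((t' - t).toNat : ℤ) := by omega
  apply not_ret_between x P ht (j := (t' - t).toNat) (by omega) ?_ (hj ▸ ht')
  have : ((t' - t).toNat : ℤ) < gapAt x P t := by
    rw [nxtR] at hcon; omega
  exact_mod_cast this

lemma word_agree {X : Set (ℤ → Bool)} (x : ℤ → Bool) (P : KRPartOn X) (N : ℕ)
    (hA1 : ∀ (k : Fin P.d) (j : ℕ), j < P.h k → AgreeOn N (shift^[j] '' P.B k))
    {t t' : ℤ} (ht : t ∈ RetSet x P) (ht' : t' ∈ RetSet x P)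
    (hk : towerIdx x P t = towerIdx x P t') :
    ∀ j : ℕ, j < gapAt x P t → x (t + (j : ℤ)) = x (t' + (j : ℤ)) := by
  intro j hj
  have h1 : sh (t + (j : ℤ)) x ∈ shift^[j] '' P.B (towerIdx x P t) :=
    sh_mem_level x P (mem_B_towerIdx x P ht) _
  have h2 : sh (t' + (j : ℤ)) x ∈ shift^[j] '' P.B (towerIdx x P t) := by
    rw [hk]
    exact sh_mem_level x P (mem_B_towerIdx x P ht') _
  have h3 := hA1 (towerIdx x P t) j hj _ h1 _ h2 0 (by simp)
  simpa using h3

lemma gapAt_eq_of_towerIdx {X : Set (ℤ → Bool)} (x : ℤ → Bool) (P : KRPartOn X) {t t' : ℤ}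
    (hk : towerIdx x P t = towerIdx x P t') : gapAt x P t = gapAt x P t' := by
  rw [gapAt, gapAt, hk]

lemma ret_cyl {X : Set (ℤ → Bool)} (x : ℤ → Bool) (P : KRPartOn X) (N : ℕ)
    (hA2 : AgreeOn N P.base) (hxb : x ∈ P.base) {t : ℤ} (ht : t ∈ RetSet x P) :
    ∀ k : ℤ, |k| ≤ (N : ℤ) → x (k + t) = x k := by
  intro k hk
  exact hA2 _ ht _ hxb k hk

/-- Maximal height of a tower of `P`. -/
def maxH {X : Set (ℤ → Bool)} (P : KRPartOn X) : ℕ :=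
  Finset.univ.sup P.h

lemma gapAt_le_maxH {X : Set (ℤ → Bool)} (x : ℤ → Bool) (P : KRPartOn X) (t : ℤ) :
    gapAt x P t ≤ maxH P :=
  Finset.le_sup (f := P.h) (Finset.mem_univ (towerIdx x P t))

/-! ### Zeros of `x` and trimmed block words -/

lemma zex (x : ℤ → Bool) (g₀ : ℕ) (hgz : ∀ t : ℤ, ∃ r : ℕ, r ≤ g₀ ∧ x (t + (r : ℤ)) = false)
    (t : ℤ) : ∃ r : ℕ, x (t + (r : ℤ)) = false := (hgz t).imp fun _ h => h.2

lemma zlex (x : ℤ → Bool) (g₀ : ℕ) (hgz : ∀ t : ℤ, ∃ r : ℕ, r ≤ g₀ ∧ x (t + (r : ℤ)) = false)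
    (e : ℤ) : ∃ r : ℕ, x (e - 1 - (r : ℤ)) = false := by
  obtain ⟨r, hr, hz⟩ := hgz (e - 1 - (g₀ : ℤ))
  refine ⟨g₀ - r, ?_⟩
  have : e - 1 - ((g₀ - r : ℕ) : ℤ) = e - 1 - (g₀ : ℤ) + (r : ℤ) := by
    push_cast [hr]
    omega
  rw [this]
  exact hz

variable (x : ℤ → Bool) (g₀ : ℕ)
  (hgz : ∀ t : ℤ, ∃ r : ℕ, r ≤ g₀ ∧ x (t + (r : ℤ)) = false)

/-- Offset of the first zero at or after `t`. -/
noncomputable def zoff (t : ℤ) : ℕ := Nat.find (zex x g₀ hgz t)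

/-- First zero at or after `t`. -/
noncomputable def cfz (t : ℤ) : ℤ := t + (zoff x g₀ hgz t : ℤ)

/-- Last zero strictly before `e`. -/
noncomputable def lzb (e : ℤ) : ℤ := e - 1 - (Nat.find (zlex x g₀ hgz e) : ℤ)

lemma cfz_zero (t : ℤ) : x (cfz x g₀ hgz t) = false := Nat.find_spec (zex x g₀ hgz t)

lemma cfz_ge (t : ℤ) : t ≤ cfz x g₀ hgz t := by
  have : (0 : ℤ) ≤ (zoff x g₀ hgz t : ℤ) := Int.natCast_nonneg _
  rw [cfz]; omega

lemma zoff_le (t : ℤ) : zoff x g₀ hgz t ≤ g₀ := by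
  obtain ⟨r, hr, hz⟩ := hgz t
  exact le_trans (Nat.find_min' (zex x g₀ hgz t) hz) hr

lemma cfz_le (t : ℤ) : cfz x g₀ hgz t ≤ t + (g₀ : ℤ) := by
  have := zoff_le x g₀ hgz t
  rw [cfz]; omega

lemma cfz_min (t s : ℤ) (h1 : t ≤ s) (h2 : s < cfz x g₀ hgz t) : x s = true := by
  have hr : ((s - t).toNat : ℤ) = s - t := Int.toNat_of_nonneg (by omega)
  have hlt : (s - t).toNat < zoff x g₀ hgz t := by
    rw [cfz] at h2; omega
  have := Nat.find_min (zex x g₀ hgz t) hlt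
  rw [show t + ((s - t).toNat : ℤ) = s by omega] at this
  cases hxs : x s
  · exact absurd hxs this
  · rfl

lemma lzb_zero (e : ℤ) : x (lzb x g₀ hgz e) = false := Nat.find_spec (zlex x g₀ hgz e)

lemma lzb_lt (e : ℤ) : lzb x g₀ hgz e < e := by
  have : (0 : ℤ) ≤ (Nat.find (zlex x g₀ hgz e) : ℤ) := Int.natCast_nonneg _
  rw [lzb]; omega

lemma lzb_ge (e : ℤ) : e - 1 - (g₀ : ℤ) ≤ lzb x g₀ hgz e := by
  obtain ⟨r, hr, hz⟩ := hgz (e - 1 - (g₀ : ℤ))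
  have hw : x (e - 1 - ((g₀ - r : ℕ) : ℤ)) = false := by
    have h2 : e - 1 - ((g₀ - r : ℕ) : ℤ) = e - 1 - (g₀ : ℤ) + (r : ℤ) := by
      push_cast [hr]
      omega
    rw [h2]; exact hz
  have := Nat.find_min' (zlex x g₀ hgz e) hw
  have h3 : (Nat.find (zlex x g₀ hgz e) : ℤ) ≤ ((g₀ - r : ℕ) : ℤ) := by exact_mod_cast this
  have h4 : ((g₀ - r : ℕ) : ℤ) ≤ (g₀ : ℤ) := by
    have : g₀ - r ≤ g₀ := Nat.sub_le _ _
    exact_mod_cast this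
  rw [lzb]; omega

lemma lzb_max (e s : ℤ) (h1 : lzb x g₀ hgz e < s) (h2 : s < e) : x s = true := by
  have hr : ((e - 1 - s).toNat : ℤ) = e - 1 - s := Int.toNat_of_nonneg (by omega)
  have hlt : (e - 1 - s).toNat < Nat.find (zlex x g₀ hgz e) := by
    rw [lzb] at h1
    omega
  have := Nat.find_min (zlex x g₀ hgz e) hlt
  rw [show e - 1 - ((e - 1 - s).toNat : ℤ) = s by omega] at this
  cases hxs : x s
  · exact absurd hxs this
  · rfl

lemma lzb_ge_of_zero (e s : ℤ) (hz : x s = false) (hse : s < e) : s ≤ lzb x g₀ hgz e := by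
  by_contra hcon
  push_neg at hcon
  rw [lzb_max x g₀ hgz e s hcon hse] at hz
  simp at hz

/-! ### Block words -/

lemma building_word_nil (w : Word) : Building.word ⟨[], w⟩ = w := rfl

lemma building_word_cons (p : Word × ℕ) (pr : List (Word × ℕ)) (w : Word) :
    Building.word ⟨p :: pr, w⟩ = p.1 ++ spacer p.2 ++ Building.word ⟨pr, w⟩ := rfl

lemma building_pieces_nil (w : Word) : Building.pieces ⟨[], w⟩ = [w] := rfl

lemma building_pieces_cons (p : Word × ℕ) (pr : List (Word × ℕ)) (w : Word) :
    Building.pieces ⟨p :: pr, w⟩ = p.1 :: Building.pieces ⟨pr, w⟩ := by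
  simp [Building.pieces]

lemma building_firstPiece_cons (p : Word × ℕ) (pr : List (Word × ℕ)) (w : Word) :
    Building.firstPiece ⟨p :: pr, w⟩ = p.1 := by
  simp [Building.firstPiece, Building.pieces]

lemma seg_congr (y : ℤ → Bool) (a a' : ℤ) (n : ℕ)
    (h : ∀ r : ℕ, r < n → y (a + (r : ℤ)) = y (a' + (r : ℤ))) : seg y a n = seg y a' n := by
  apply List.map_congr_left
  intro r hr
  exact h r (List.mem_range.1 hr)

/-- The trimmed block word at return time `t`: from the first zero in the block to the
last zero in the block. -/
noncomputable def bwd {X : Set (ℤ → Bool)} (P : KRPartOn X) (t : ℤ) : Word :=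
  seg x (cfz x g₀ hgz t) ((lzb x g₀ hgz (nxtR x P t) - cfz x g₀ hgz t).toNat + 1)

/-- The spacer length after the block at `t`. -/
noncomputable def spcw {X : Set (ℤ → Bool)} (P : KRPartOn X) (t : ℤ) : ℕ :=
  (cfz x g₀ hgz (nxtR x P t) - lzb x g₀ hgz (nxtR x P t) - 1).toNat

lemma cfz_lt_lzb {X : Set (ℤ → Bool)} (P : KRPartOn X) (t : ℤ)
    (hbig : (3 * (g₀ : ℤ) + 2) < (gapAt x P t : ℤ)) :
    cfz x g₀ hgz t < lzb x g₀ hgz (nxtR x P t) := by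
  have h1 := cfz_le x g₀ hgz t
  have h2 := lzb_ge x g₀ hgz (nxtR x P t)
  have h6 : nxtR x P t = t + (gapAt x P t : ℤ) := rfl
  omega

lemma bwd_FF {X : Set (ℤ → Bool)} (P : KRPartOn X) (t : ℤ)
    (hbig : (3 * (g₀ : ℤ) + 2) < (gapAt x P t : ℤ)) : bwd x g₀ hgz P t ∈ FF := by
  have hlt := cfz_lt_lzb x g₀ hgz P t hbig
  apply seg_mem_FF
  · exact cfz_zero x g₀ hgz t
  · rw [show cfz x g₀ hgz t +
      (((lzb x g₀ hgz (nxtR x P t) - cfz x g₀ hgz t).toNat : ℤ)) = lzb x g₀ hgz (nxtR x P t)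
      by omega]
    exact lzb_zero x g₀ hgz _

lemma bwd_ne_singleton {X : Set (ℤ → Bool)} (P : KRPartOn X) (t : ℤ)
    (hbig : (3 * (g₀ : ℤ) + 2) < (gapAt x P t : ℤ)) : bwd x g₀ hgz P t ≠ [false] := by
  have hlt := cfz_lt_lzb x g₀ hgz P t hbig
  intro hc
  have := congrArg List.length hc
  rw [bwd] at this
  simp at this
  omega

lemma bwd_eq_of_towerIdx {X : Set (ℤ → Bool)} (P : KRPartOn X) (N : ℕ)
    (hA1 : ∀ (k : Fin P.d) (j : ℕ), j < P.h k → AgreeOn N (shift^[j] '' P.B k))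
    {t t' : ℤ} (ht : t ∈ RetSet x P) (ht' : t' ∈ RetSet x P)
    (hk : towerIdx x P t = towerIdx x P t')
    (hbig : (3 * (g₀ : ℤ) + 2) < (gapAt x P t : ℤ)) :
    bwd x g₀ hgz P t = bwd x g₀ hgz P t' := by
  have hgeq : gapAt x P t = gapAt x P t' := gapAt_eq_of_towerIdx x P hk
  have agr := word_agree x P N hA1 ht ht' hk
  have agr' := word_agree x P N hA1 ht' ht hk.symm
  have hg₀gap : (g₀ : ℤ) + 1 < (gapAt x P t : ℤ) := by omega
  -- the first-zero offsets agree
  have hz : zoff x g₀ hgz t = zoff x g₀ hgz t' := by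
    apply le_antisymm
    · apply Nat.find_min'
      have h1 : zoff x g₀ hgz t' < gapAt x P t := by
        have := zoff_le x g₀ hgz t'
        have h2 : (zoff x g₀ hgz t' : ℤ) < (gapAt x P t : ℤ) := by omega
        exact_mod_cast h2
      rw [agr _ h1]
      exact Nat.find_spec (zex x g₀ hgz t')
    · apply Nat.find_min'
      have h1 : zoff x g₀ hgz t < gapAt x P t' := by
        have := zoff_le x g₀ hgz t
        have h2 : (zoff x g₀ hgz t : ℤ) < (gapAt x P t' : ℤ) := by
          rw [← hgeq]; omega
        exact_mod_cast h2
      rw [agr' _ h1]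
      exact Nat.find_spec (zex x g₀ hgz t)
  -- the last-zero offsets agree
  have hfg : ∀ s : ℤ, s ∈ RetSet x P → Nat.find (zlex x g₀ hgz (nxtR x P s)) ≤ g₀ := by
    intro s _
    have h1 := lzb_ge x g₀ hgz (nxtR x P s)
    rw [lzb] at h1
    omega
  have hf : Nat.find (zlex x g₀ hgz (nxtR x P t)) = Nat.find (zlex x g₀ hgz (nxtR x P t')) := by
    have key : ∀ u u' : ℤ, u ∈ RetSet x P → u' ∈ RetSet x P →
        towerIdx x P u = towerIdx x P u' → (3 * (g₀ : ℤ) + 2) < (gapAt x P u : ℤ) →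
        Nat.find (zlex x g₀ hgz (nxtR x P u)) ≤ Nat.find (zlex x g₀ hgz (nxtR x P u')) := by
      intro u u' hu hu' huk hbigu
      apply Nat.find_min'
      set f' := Nat.find (zlex x g₀ hgz (nxtR x P u')) with hf'def
      have hf'g : f' ≤ g₀ := hfg u' hu'
      set j : ℕ := gapAt x P u - 1 - f' with hjdef
      have hgequ : gapAt x P u = gapAt x P u' := gapAt_eq_of_towerIdx x P huk
      have hjlt : j < gapAt x P u := by
        have := gapAt_pos x P u
        omega
      have hjcast : (j : ℤ) = (gapAt x P u : ℤ) - 1 - (f' : ℤ) := by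
        have h2 : (f' : ℤ) + 1 ≤ (gapAt x P u : ℤ) := by omega
        push_cast [hjdef]
        omega
      have h3 : nxtR x P u - 1 - (f' : ℤ) = u + (j : ℤ) := by
        rw [nxtR, hjcast]; ring
      have h4 : nxtR x P u' - 1 - (f' : ℤ) = u' + (j : ℤ) := by
        rw [nxtR, hjcast, hgequ]; ring
      have h5 := word_agree x P N hA1 hu hu' huk j hjlt
      rw [h3, h5, ← h4]
      exact Nat.find_spec (zlex x g₀ hgz (nxtR x P u'))
    exact le_antisymm (key t t' ht ht' hk hbig)
      (key t' t ht' ht hk.symm (by rw [← hgeq]; exact hbig))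
  -- conclude
  have hL : lzb x g₀ hgz (nxtR x P t) - cfz x g₀ hgz t =
      lzb x g₀ hgz (nxtR x P t') - cfz x g₀ hgz t' := by
    rw [lzb, lzb, cfz, cfz, hz, hf, nxtR, nxtR, hgeq]
    ring
  rw [bwd, bwd, ← hL]
  apply seg_congr
  intro r hr
  have hrange : (zoff x g₀ hgz t : ℤ) + r < (gapAt x P t : ℤ) := by
    have h1 : (r : ℤ) ≤ lzb x g₀ hgz (nxtR x P t) - cfz x g₀ hgz t := by
      have h2 : (r : ℤ) < ((lzb x g₀ hgz (nxtR x P t) - cfz x g₀ hgz t).toNat : ℤ) + 1 := by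
        exact_mod_cast hr
      have h3 := cfz_lt_lzb x g₀ hgz P t hbig
      omega
    have h4 := lzb_lt x g₀ hgz (nxtR x P t)
    have h6 : nxtR x P t = t + (gapAt x P t : ℤ) := rfl
    rw [cfz] at h1
    omega
  have hj : zoff x g₀ hgz t + r < gapAt x P t := by exact_mod_cast hrange
  have h5 := agr (zoff x g₀ hgz t + r) hj
  have e1 : cfz x g₀ hgz t + (r : ℤ) = t + ((zoff x g₀ hgz t + r : ℕ) : ℤ) := by
    rw [cfz]; push_cast; ring
  have e2 : cfz x g₀ hgz t' + (r : ℤ) = t' + ((zoff x g₀ hgz t + r : ℕ) : ℤ) := by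
    rw [cfz, ← hz]; push_cast; ring
  rw [e1, e2, h5]

/-- Decomposition of a long block into the blocks of a (finer) partition. -/
lemma build_block {X : Set (ℤ → Bool)} (P : KRPartOn X)
    (hbigAll : ∀ s, s ∈ RetSet x P → (3 * (g₀ : ℤ) + 2) < (gapAt x P s : ℤ)) :
    ∀ (fuel : ℕ) (t T' : ℤ), t ∈ RetSet x P → T' ∈ RetSet x P → t < T' →
      (T' - t).toNat ≤ fuel →
      ∃ b : Building,
        (∀ v ∈ b.pieces, ∃ s, s ∈ RetSet x P ∧ t ≤ s ∧ s < T' ∧ v = bwd x g₀ hgz P s) ∧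
        b.word = seg x (cfz x g₀ hgz t) ((lzb x g₀ hgz T' - cfz x g₀ hgz t).toNat + 1) ∧
        b.firstPiece = bwd x g₀ hgz P t ∧
        (nxtR x P t < T' → b.pairs ≠ []) := by
  intro fuel
  induction fuel with
  | zero =>
    intro t T' ht hT hlt hfuel
    omega
  | succ fuel ih =>
    intro t T' ht hT hlt hfuel
    have hnle : nxtR x P t ≤ T' := nxtR_le x P ht hT hlt
    have hgpos := gapAt_pos x P t
    have htlt : t < nxtR x P t := by rw [nxtR]; omega
    rcases eq_or_lt_of_le hnle with heq | hltn
    · refine ⟨⟨[], bwd x g₀ hgz P t⟩, ?_, ?_, rfl, fun hc => absurd heq (by omega)⟩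
      · intro v hv
        rw [building_pieces_nil] at hv
        simp only [List.mem_singleton] at hv
        exact ⟨t, ht, le_refl t, hlt, hv⟩
      · rw [building_word_nil, bwd, heq]
    · set t₁ := nxtR x P t with ht₁def
      have ht₁ : t₁ ∈ RetSet x P := nxtR_mem x P ht
      have hbig := hbigAll t ht
      have hbig₁ := hbigAll t₁ ht₁
      have hfuel' : (T' - t₁).toNat ≤ fuel := by omega
      obtain ⟨b', hp', hw', hf', _⟩ := ih t₁ T' ht₁ hT hltn hfuel'
      refine ⟨⟨(bwd x g₀ hgz P t, spcw x g₀ hgz P t) :: b'.pairs, b'.last⟩, ?_, ?_,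
        building_firstPiece_cons _ _ _, fun _ => by simp⟩
      · intro v hv
        rw [building_pieces_cons, List.mem_cons] at hv
        rcases hv with rfl | hv
        · exact ⟨t, ht, le_refl t, hlt, rfl⟩
        · obtain ⟨s, hs, hs1, hs2, hs3⟩ := hp' v hv
          exact ⟨s, hs, by omega, hs2, hs3⟩
      · rw [building_word_cons, hw']
        set A := cfz x g₀ hgz t with hA
        set B := lzb x g₀ hgz t₁ with hB
        set C := cfz x g₀ hgz t₁ with hC
        set D := lzb x g₀ hgz T' with hD
        have hAB : A < B := cfz_lt_lzb x g₀ hgz P t hbig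
        have hBt₁ : B < t₁ := lzb_lt x g₀ hgz t₁
        have ht₁C : t₁ ≤ C := cfz_ge x g₀ hgz t₁
        have hCle : C ≤ t₁ + (g₀ : ℤ) := cfz_le x g₀ hgz t₁
        have hnxt₁ : nxtR x P t₁ ≤ T' := nxtR_le x P ht₁ hT hltn
        have hCT' : C < T' := by
          have : t₁ + (g₀ : ℤ) < nxtR x P t₁ := by rw [nxtR]; omega
          omega
        have hCD : C ≤ D :=
          lzb_ge_of_zero x g₀ hgz T' C (cfz_zero x g₀ hgz t₁) hCT'
        -- the spacer is the all-ones stretch between B and C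
        have hsp : spacer (spcw x g₀ hgz P t) = seg x (B + 1) (C - B - 1).toNat := by
          rw [eq_comm]
          apply seg_all_true
          intro r hr
          have hrC : B + 1 + (r : ℤ) < C := by
            have : (r : ℤ) < ((C - B - 1).toNat : ℤ) := by exact_mod_cast hr
            omega
          rcases lt_or_ge (B + 1 + (r : ℤ)) t₁ with hcase | hcase
          · exact lzb_max x g₀ hgz t₁ _ (by omega) hcase
          · exact cfz_min x g₀ hgz t₁ _ hcase hrC
        have hlen1 : A + (((B - A).toNat + 1 : ℕ) : ℤ) = B + 1 := by push_cast; omega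
        have hlen2 : (B + 1) + (((C - B - 1).toNat : ℕ) : ℤ) = C := by push_cast; omega
        show bwd x g₀ hgz P t ++ spacer (spcw x g₀ hgz P t) ++
            seg x C ((D - C).toNat + 1) = seg x A ((D - A).toNat + 1)
        rw [bwd, ← hA, ← ht₁def, ← hB, hsp]
        rw [show seg x (B + 1) (C - B - 1).toNat = seg x (A + (((B - A).toNat + 1 : ℕ) : ℤ)) (C - B - 1).toNat by rw [hlen1]]
        rw [seg_append]
        rw [show seg x C ((D - C).toNat + 1) = seg x (A + ((((B - A).toNat + 1) + (C - B - 1).toNat : ℕ) : ℤ)) ((D - C).toNat + 1) by congr 1; push_cast; omega]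
        rw [seg_append]
        congr 1
        omega

/-! ### Choosing a nested chain of Kakutani–Rohlin partitions -/

/-- Level data: a KR partition with agreement window `N` and a lower bound `gapB` for
gaps between consecutive return times of `x`. -/
structure Lvl (X : Set (ℤ → Bool)) (x : ℤ → Bool) (n : ℕ) where
  N : ℕ
  P : KRPartOn X
  hd : P.d ≤ n
  hA1 : ∀ (k : Fin P.d) (j : ℕ), j < P.h k → AgreeOn N (shift^[j] '' P.B k)
  hA2 : AgreeOn N P.base
  hxB : x ∈ P.base
  gapB : ℕ
  hgap : ∀ t t' : ℤ, t ∈ RetSet x P → t' ∈ RetSet x P → t < t' → (gapB : ℤ) < t' - t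

lemma Lvl.zero_mem {X : Set (ℤ → Bool)} {x : ℤ → Bool} {n : ℕ} (L : Lvl X x n) :
    (0 : ℤ) ∈ RetSet x L.P := by
  show sh 0 x ∈ L.P.base
  rw [sh_zero]
  exact L.hxB

lemma Lvl.gap_big {X : Set (ℤ → Bool)} {x : ℤ → Bool} {n : ℕ} (L : Lvl X x n) :
    ∀ t, t ∈ RetSet x L.P → (L.gapB : ℤ) < (gapAt x L.P t : ℤ) := by
  intro t ht
  have h1 := L.hgap t (nxtR x L.P t) ht (nxtR_mem x L.P ht) ?_
  · rw [nxtR] at h1; omega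
  · rw [nxtR]
    have := gapAt_pos x L.P t
    omega

lemma exists_gap_window (x : ℤ → Bool)
    (hap : ∀ p : ℕ, 1 ≤ p → ∃ s : ℤ, x s ≠ x (s + (p : ℤ))) (G : ℕ) :
    ∃ Ng : ℕ, ∀ t t' : ℤ, (∀ k : ℤ, |k| ≤ (Ng : ℤ) → x (k + t) = x k) →
      (∀ k : ℤ, |k| ≤ (Ng : ℤ) → x (k + t') = x k) → t < t' → t' - t ≤ (G : ℤ) → False := by
  classical
  set ws : ℕ → ℤ := fun p => if h : 1 ≤ p then (hap p h).choose else 0 with hws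
  have hwsp : ∀ p : ℕ, 1 ≤ p → x (ws p) ≠ x (ws p + (p : ℤ)) := by
    intro p hp
    rw [hws]
    simp only [dif_pos hp]
    exact (hap p hp).choose_spec
  set S := (Finset.Icc 1 G).sup (fun p => (ws p).natAbs) with hS
  refine ⟨G + S, ?_⟩
  intro t t' hcyl hcyl' hlt hle
  set p : ℕ := (t' - t).toNat with hp
  have hp1 : 1 ≤ p := by omega
  have hpG : p ≤ G := by omega
  have hpcast : (p : ℤ) = t' - t := by omega
  set s := ws p with hsdef
  have hsS : |s| ≤ (S : ℤ) := by
    have h1 : (ws p).natAbs ≤ S :=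
      Finset.le_sup (f := fun p => (ws p).natAbs) (Finset.mem_Icc.2 ⟨hp1, hpG⟩)
    rw [Int.abs_eq_natAbs]
    exact_mod_cast h1
  have e1 : x ((s + p) + t) = x (s + p) := by
    apply hcyl
    have habs : |s + (p : ℤ)| ≤ |s| + (p : ℤ) := by
      have := abs_add_le s (p : ℤ)
      have h2 : |(p : ℤ)| = (p : ℤ) := abs_of_nonneg (by positivity)
      omega
    push_cast
    omega
  have e2 : x (s + t') = x s := by
    apply hcyl'
    push_cast
    omega
  have e3 : (s + (p : ℤ)) + t = s + t' := by omega
  exact hwsp p hp1 (by rw [← e2, ← e3, e1])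

lemma exists_lvl {X : Set (ℤ → Bool)} (x : ℤ → Bool) (n : ℕ)
    (hTR : ∀ N : ℕ, ∃ P : KRPartOn X, P.d ≤ n ∧
      (∀ (k : Fin P.d) (j : ℕ), j < P.h k → AgreeOn N (shift^[j] '' P.B k)) ∧
      AgreeOn N P.base ∧ x ∈ P.base)
    (hap : ∀ p : ℕ, 1 ≤ p → ∃ s : ℤ, x s ≠ x (s + (p : ℤ))) (G₀ W₀ : ℕ) :
    ∃ L : Lvl X x n, G₀ ≤ L.gapB ∧ W₀ ≤ L.N := by
  obtain ⟨Ng, hNg⟩ := exists_gap_window x hap G₀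
  obtain ⟨P, hd, hA1, hA2, hxB⟩ := hTR (max Ng W₀)
  refine ⟨⟨max Ng W₀, P, hd, hA1, hA2, hxB, G₀, ?_⟩, le_refl G₀, le_max_right _ _⟩
  intro t t' ht ht' hlt
  by_contra hcon
  push_neg at hcon
  apply hNg t t' ?_ ?_ hlt (by omega)
  · intro k hk
    apply ret_cyl x P _ hA2 hxB ht k
    have := le_max_left Ng W₀
    omega
  · intro k hk
    apply ret_cyl x P _ hA2 hxB ht' k
    have := le_max_left Ng W₀
    omega

lemma exists_lvl_step {X : Set (ℤ → Bool)} (hXsub : IsSubshift X) (x : ℤ → Bool) (hx : x ∈ X)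
    (n : ℕ)
    (hTR : ∀ N : ℕ, ∃ P : KRPartOn X, P.d ≤ n ∧
      (∀ (k : Fin P.d) (j : ℕ), j < P.h k → AgreeOn N (shift^[j] '' P.B k)) ∧
      AgreeOn N P.base ∧ x ∈ P.base)
    (hap : ∀ p : ℕ, 1 ≤ p → ∃ s : ℤ, x s ≠ x (s + (p : ℤ)))
    (prev : Lvl X x n) (G₀ : ℕ) :
    ∃ L : Lvl X x n, G₀ ≤ L.gapB ∧ RetSet x L.P ⊆ RetSet x prev.P := by
  obtain ⟨W, hW⟩ := exists_window prev.P x hx prev.hxB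
  obtain ⟨L, hG, hN⟩ := exists_lvl x n hTR hap G₀ W
  refine ⟨L, hG, ?_⟩
  intro t ht
  show sh t x ∈ prev.P.base
  apply hW (sh t x) (sh_mem_of_subshift hXsub t x hx)
  intro k hk
  show x (k + t) = x k
  exact ret_cyl x L.P L.N L.hA2 L.hxB ht k (by omega)

lemma exists_lvl_chain {X : Set (ℤ → Bool)} (hXsub : IsSubshift X) (x : ℤ → Bool) (hx : x ∈ X)
    (n : ℕ)
    (hTR : ∀ N : ℕ, ∃ P : KRPartOn X, P.d ≤ n ∧
      (∀ (k : Fin P.d) (j : ℕ), j < P.h k → AgreeOn N (shift^[j] '' P.B k)) ∧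
      AgreeOn N P.base ∧ x ∈ P.base)
    (hap : ∀ p : ℕ, 1 ≤ p → ∃ s : ℤ, x s ≠ x (s + (p : ℤ))) (g₀ : ℕ) :
    ∃ lvl : ℕ → Lvl X x n,
      (∀ i, 3 * g₀ + 3 + i ≤ (lvl i).gapB) ∧
      (∀ i, RetSet x (lvl (i + 1)).P ⊆ RetSet x (lvl i).P) ∧
      (∀ i, maxH (lvl i).P ≤ (lvl (i + 1)).gapB) := by
  classical
  obtain ⟨L0, hL0, _⟩ := exists_lvl x n hTR hap (3 * g₀ + 3) 0
  let lvl : ℕ → Lvl X x n := fun i => Nat.rec L0 (fun i prev =>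
    (exists_lvl_step hXsub x hx n hTR hap prev
      (max (3 * g₀ + 3 + (i + 1)) (maxH prev.P))).choose) i
  have hlvl_succ : ∀ i, lvl (i + 1) =
      (exists_lvl_step hXsub x hx n hTR hap (lvl i)
        (max (3 * g₀ + 3 + (i + 1)) (maxH (lvl i).P))).choose := fun i => rfl
  have hspec : ∀ i, max (3 * g₀ + 3 + (i + 1)) (maxH (lvl i).P) ≤ (lvl (i + 1)).gapB ∧
      RetSet x (lvl (i + 1)).P ⊆ RetSet x (lvl i).P := by
    intro i
    rw [hlvl_succ i]
    exact (exists_lvl_step hXsub x hx n hTR hap (lvl i)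
      (max (3 * g₀ + 3 + (i + 1)) (maxH (lvl i).P))).choose_spec
  refine ⟨lvl, ?_, fun i => (hspec i).2, ?_⟩
  · intro i
    cases i with
    | zero => exact hL0
    | succ i =>
      have := (hspec i).1
      have h2 := le_max_left (3 * g₀ + 3 + (i + 1)) (maxH (lvl i).P)
      omega
  · intro i
    have := (hspec i).1
    have h2 := le_max_right (3 * g₀ + 3 + (i + 1)) (maxH (lvl i).P)
    omega

/-! ### The words of the rank construction -/

def niF (n : ℕ) : ℕ → ℕ := fun i => if i = 0 then 1 else n + 1

lemma niF_zero (n : ℕ) : niF n 0 = 1 := rfl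

lemma niF_succ (n : ℕ) (i : ℕ) : niF n (i + 1) = n + 1 := by
  simp [niF]

/-- Representative word for the `k`-th tower at level `i`. -/
noncomputable def repW {X : Set (ℤ → Bool)} {n : ℕ} (lvl : ℕ → Lvl X x n) (i k : ℕ) : Word :=
  if hk : k < (lvl i).P.d then
    (if hv : ∃ t, t ∈ RetSet x (lvl i).P ∧ towerIdx x (lvl i).P t = ⟨k, hk⟩ then
      bwd x g₀ hgz (lvl i).P hv.choose
    else bwd x g₀ hgz (lvl i).P 0)
  else bwd x g₀ hgz (lvl i).P 0

/-- The words of the construction. -/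
noncomputable def wdF {X : Set (ℤ → Bool)} {n : ℕ} (lvl : ℕ → Lvl X x n) : ℕ → ℕ → Word
  | 0, _ => [false]
  | (i+1), j => if j = 1 then bwd x g₀ hgz (lvl i).P 0 else repW x g₀ hgz lvl i (j - 2)

lemma wdF_zero {X : Set (ℤ → Bool)} {n : ℕ} (lvl : ℕ → Lvl X x n) (j : ℕ) :
    wdF x g₀ hgz lvl 0 j = [false] := rfl

lemma wdF_succ {X : Set (ℤ → Bool)} {n : ℕ} (lvl : ℕ → Lvl X x n) (i j : ℕ) :
    wdF x g₀ hgz lvl (i + 1) j =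
      if j = 1 then bwd x g₀ hgz (lvl i).P 0 else repW x g₀ hgz lvl i (j - 2) := rfl

lemma repW_spec {X : Set (ℤ → Bool)} {n : ℕ} (lvl : ℕ → Lvl X x n) (i k : ℕ) :
    ∃ t, t ∈ RetSet x (lvl i).P ∧ repW x g₀ hgz lvl i k = bwd x g₀ hgz (lvl i).P t := by
  rw [repW]
  by_cases hk : k < (lvl i).P.d
  · rw [dif_pos hk]
    by_cases hv : ∃ t, t ∈ RetSet x (lvl i).P ∧ towerIdx x (lvl i).P t = ⟨k, hk⟩
    · rw [dif_pos hv]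
      exact ⟨hv.choose, hv.choose_spec.1, rfl⟩
    · rw [dif_neg hv]
      exact ⟨0, (lvl i).zero_mem, rfl⟩
  · rw [dif_neg hk]
    exact ⟨0, (lvl i).zero_mem, rfl⟩

lemma wdF_spec {X : Set (ℤ → Bool)} {n : ℕ} (lvl : ℕ → Lvl X x n) (i j : ℕ) :
    ∃ t, t ∈ RetSet x (lvl i).P ∧ wdF x g₀ hgz lvl (i + 1) j = bwd x g₀ hgz (lvl i).P t ∧
      (j = 1 → t = 0) := by
  rw [wdF_succ]
  by_cases hj : j = 1
  · rw [if_pos hj]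
    exact ⟨0, (lvl i).zero_mem, rfl, fun _ => rfl⟩
  · rw [if_neg hj]
    obtain ⟨t, ht, hw⟩ := repW_spec x g₀ hgz lvl i (j - 2)
    exact ⟨t, ht, hw, fun h => absurd h hj⟩

lemma wd_cover {X : Set (ℤ → Bool)} {n : ℕ} (lvl : ℕ → Lvl X x n) (i : ℕ)
    (hbig : ∀ s, s ∈ RetSet x (lvl i).P → (3 * (g₀ : ℤ) + 2) < (gapAt x (lvl i).P s : ℤ))
    (s : ℤ) (hs : s ∈ RetSet x (lvl i).P) :
    ∃ j, 1 ≤ j ∧ j ≤ n + 1 ∧ wdF x g₀ hgz lvl (i + 1) j = bwd x g₀ hgz (lvl i).P s := by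
  set k := towerIdx x (lvl i).P s with hkdef
  have hkd : (k : ℕ) < (lvl i).P.d := k.isLt
  refine ⟨(k : ℕ) + 2, by omega, ?_, ?_⟩
  · have := (lvl i).hd
    omega
  · rw [wdF_succ, if_neg (by omega), show (k : ℕ) + 2 - 2 = (k : ℕ) from rfl, repW,
      dif_pos hkd]
    have hv : ∃ t, t ∈ RetSet x (lvl i).P ∧ towerIdx x (lvl i).P t = ⟨(k : ℕ), hkd⟩ :=
      ⟨s, hs, by rw [← hkdef]⟩
    rw [dif_pos hv]
    apply bwd_eq_of_towerIdx x g₀ hgz (lvl i).P (lvl i).N (lvl i).hA1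
      hv.choose_spec.1 hs ?_ (hbig _ hv.choose_spec.1)
    rw [hv.choose_spec.2, ← hkdef]

lemma false_mem_FF : ([false] : Word) ∈ FF := ⟨by simp, rfl, rfl⟩

lemma wd_FF {X : Set (ℤ → Bool)} {n : ℕ} (lvl : ℕ → Lvl X x n)
    (hbig : ∀ i, ∀ s, s ∈ RetSet x (lvl i).P →
      (3 * (g₀ : ℤ) + 2) < (gapAt x (lvl i).P s : ℤ)) (i j : ℕ) :
    wdF x g₀ hgz lvl i j ∈ FF := by
  cases i with
  | zero => exact false_mem_FF
  | succ i =>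
    obtain ⟨t, ht, hw, _⟩ := wdF_spec x g₀ hgz lvl i j
    rw [hw]
    exact bwd_FF x g₀ hgz (lvl i).P t (hbig i t ht)

/-- The building of a level-`(i+2)` block out of level-`(i+1)` blocks. -/
lemma block_building {X : Set (ℤ → Bool)} {n : ℕ} (lvl : ℕ → Lvl X x n) (i : ℕ)
    (hbig_i : ∀ s, s ∈ RetSet x (lvl i).P →
      (3 * (g₀ : ℤ) + 2) < (gapAt x (lvl i).P s : ℤ))
    (hsub : RetSet x (lvl (i + 1)).P ⊆ RetSet x (lvl i).P)
    (hmaxH : maxH (lvl i).P ≤ (lvl (i + 1)).gapB)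
    (t : ℤ) (ht : t ∈ RetSet x (lvl (i + 1)).P) :
    ∃ b : Building,
      (∀ v ∈ b.pieces, ∃ s, s ∈ RetSet x (lvl i).P ∧ v = bwd x g₀ hgz (lvl i).P s) ∧
      b.word = bwd x g₀ hgz (lvl (i + 1)).P t ∧
      b.firstPiece = bwd x g₀ hgz (lvl i).P t ∧
      b.pairs ≠ [] := by
  set T' := nxtR x (lvl (i + 1)).P t with hT'def
  have hT'mem1 : T' ∈ RetSet x (lvl (i + 1)).P := nxtR_mem x (lvl (i + 1)).P ht
  have hT' : T' ∈ RetSet x (lvl i).P := hsub hT'mem1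
  have hti : t ∈ RetSet x (lvl i).P := hsub ht
  have hgap1 := (lvl (i + 1)).gap_big t ht
  have hlt : t < T' := by
    rw [hT'def, nxtR]
    have := gapAt_pos x (lvl (i + 1)).P t
    omega
  obtain ⟨b, hp, hw, hf, hne⟩ := build_block x g₀ hgz (lvl i).P hbig_i
    ((T' - t).toNat) t T' hti hT' hlt (le_refl _)
  refine ⟨b, ?_, ?_, hf, ?_⟩
  · intro v hv
    obtain ⟨s, hs, _, _, hveq⟩ := hp v hv
    exact ⟨s, hs, hveq⟩
  · rw [hw]
    rfl
  · apply hne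
    have h1 : gapAt x (lvl i).P t ≤ maxH (lvl i).P := gapAt_le_maxH x (lvl i).P t
    have h2 : ((lvl (i + 1)).gapB : ℤ) < (gapAt x (lvl (i + 1)).P t : ℤ) := hgap1
    rw [nxtR, hT'def, nxtR]
    have h3 : (gapAt x (lvl i).P t : ℤ) ≤ (maxH (lvl i).P : ℤ) := by exact_mod_cast h1
    have h4 : ((maxH (lvl i).P : ℕ) : ℤ) ≤ ((lvl (i + 1)).gapB : ℤ) := by exact_mod_cast hmaxH
    omega

/-- Existence of the chosen buildings. -/
lemma bld_exists {X : Set (ℤ → Bool)} {n : ℕ} (lvl : ℕ → Lvl X x n)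
    (hbig : ∀ i, ∀ s, s ∈ RetSet x (lvl i).P →
      (3 * (g₀ : ℤ) + 2) < (gapAt x (lvl i).P s : ℤ))
    (hsub : ∀ i, RetSet x (lvl (i + 1)).P ⊆ RetSet x (lvl i).P)
    (hmaxH : ∀ i, maxH (lvl i).P ≤ (lvl (i + 1)).gapB)
    (i j : ℕ) :
    ∃ b : Building,
      (1 ≤ j → j ≤ n + 1 →
        (b.FromSet (levelSet (niF n) (wdF x g₀ hgz lvl) i) ∧
          b.word = wdF x g₀ hgz lvl (i + 1) j)) ∧
      (j = 1 → b.firstPiece = wdF x g₀ hgz lvl i 1) := by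
  by_cases hrange : 1 ≤ j ∧ j ≤ n + 1
  swap
  · refine ⟨⟨[], []⟩, fun h1 h2 => absurd ⟨h1, h2⟩ hrange, fun hj => ?_⟩
    exact absurd ⟨by omega, by omega⟩ hrange
  obtain ⟨t, ht, hw, h1t⟩ := wdF_spec x g₀ hgz lvl i j
  cases i with
  | zero =>
    have hwFF : wdF x g₀ hgz lvl (0 + 1) j ∈ FF := by
      rw [hw]
      exact bwd_FF x g₀ hgz (lvl 0).P t (hbig 0 t ht)
    obtain ⟨b, hbp, hbw, hbf, hbne⟩ := build_from_false (wdF x g₀ hgz lvl (0 + 1) j).length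
      (wdF x g₀ hgz lvl (0 + 1) j) (le_refl _) hwFF
    refine ⟨b, fun _ _ => ⟨⟨?_, ?_⟩, hbw⟩, fun _ => ?_⟩
    · apply hbne
      rw [hw]
      exact bwd_ne_singleton x g₀ hgz (lvl 0).P t (hbig 0 t ht)
    · intro v hv
      rw [hbp v hv]
      exact ⟨1, le_refl 1, by rw [niF_zero], rfl⟩
    · rw [hbf]
      rfl
  | succ i =>
    obtain ⟨b, hbp, hbw, hbf, hbne⟩ := block_building x g₀ hgz lvl i (hbig i) (hsub i)
      (hmaxH i) t ht
    refine ⟨b, fun _ _ => ⟨⟨hbne, ?_⟩, ?_⟩, fun hj => ?_⟩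
    · intro v hv
      obtain ⟨s, hs, hveq⟩ := hbp v hv
      obtain ⟨j', hj'1, hj'2, hj'w⟩ := wd_cover x g₀ hgz lvl i (hbig i) s hs
      refine ⟨j', hj'1, ?_, by rw [hj'w, hveq]⟩
      rw [niF_succ]
      exact hj'2
    · rw [hbw, hw]
    · rw [hbf, h1t hj, wdF_succ, if_pos rfl]

/-! ### Assembling the rank construction -/

lemma main_construction {X : Set (ℤ → Bool)} {n : ℕ} (lvl : ℕ → Lvl X x n)
    (hbig : ∀ i, ∀ s, s ∈ RetSet x (lvl i).P →
      (3 * (g₀ : ℤ) + 2) < (gapAt x (lvl i).P s : ℤ))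
    (hsub : ∀ i, RetSet x (lvl (i + 1)).P ⊆ RetSet x (lvl i).P)
    (hmaxH : ∀ i, maxH (lvl i).P ≤ (lvl (i + 1)).gapB)
    (hlen : ∀ i, 3 * g₀ + 3 + i ≤ (lvl i).gapB) :
    HasRankConstr (fun k : ℕ => x (cfz x g₀ hgz 0 + (k : ℤ))) (n + 1) := by
  classical
  refine ⟨⟨niF n, wdF x g₀ hgz lvl,
    fun i j => (bld_exists x g₀ hgz lvl hbig hsub hmaxH i j).choose,
    ?_, ?_, ?_, ?_, ?_, ?_, ?_⟩, ?_, ?_⟩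
  · intro i
    unfold niF
    split <;> omega
  · intro i
    unfold niF
    split <;> omega
  · intro i j _ _
    exact wd_FF x g₀ hgz lvl hbig i j
  · intro j _ _
    rfl
  · intro i j h1 h2
    rw [niF_succ] at h2
    exact (((bld_exists x g₀ hgz lvl hbig hsub hmaxH i j).choose_spec.1) h1 h2).1
  · intro i j h1 h2
    rw [niF_succ] at h2
    exact (((bld_exists x g₀ hgz lvl hbig hsub hmaxH i j).choose_spec.1) h1 h2).2
  · intro i
    exact (bld_exists x g₀ hgz lvl hbig hsub hmaxH i 1).choose_spec.2 rfl
  · -- InfExtends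
    intro i
    cases i with
    | zero =>
      intro k hk
      have hk0 : k = 0 := by simpa [wdF_zero] using hk
      subst hk0
      simp only [wdF_zero, Nat.cast_zero, add_zero]
      have := cfz_zero x g₀ hgz 0
      simp [this]
    | succ i =>
      intro k hk
      have hk' : k < (wdF x g₀ hgz lvl (i + 1) 1).length := hk
      show (wdF x g₀ hgz lvl (i + 1) 1).getD k false = x (cfz x g₀ hgz 0 + (k : ℤ))
      rw [wdF_succ, if_pos rfl] at hk' ⊢
      rw [bwd] at hk' ⊢
      rw [seg_getD x _ (by simpa using hk')]
  · -- lengths unbounded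
    intro m
    refine ⟨m + 1, ?_⟩
    show m ≤ (wdF x g₀ hgz lvl (m + 1) 1).length
    rw [wdF_succ, if_pos rfl, bwd]
    have h1 : (lzb x g₀ hgz (nxtR x (lvl m).P 0) - cfz x g₀ hgz 0).toNat + 1 ≥ m + 1 := by
      have h2 := lzb_ge x g₀ hgz (nxtR x (lvl m).P 0)
      have h3 : nxtR x (lvl m).P 0 = 0 + (gapAt x (lvl m).P 0 : ℤ) := rfl
      have h4 := (lvl m).gap_big 0 (lvl m).zero_mem
      have h5 := hlen m
      have h6 : ((lvl m).gapB : ℤ) ≥ 3 * (g₀ : ℤ) + 3 + m := by exact_mod_cast h5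
      have h7 := cfz_le x g₀ hgz 0
      omega
    simp only [seg_length]
    omega

end Aux18

/-- Corollary 7.4. A minimal subshift of topological rank `n ≥ 2` has
finite symbolic rank. -/
theorem statement_18 (n : ℕ) (hn : 2 ≤ n) (X : Set (ℤ → Bool)) (hmin : MinimalSubshift X)
    (hrank : TopRankLE X n ∧ ∀ m : ℕ, TopRankLE X m → n ≤ m) :
    ∃ m : ℕ, 1 ≤ m ∧ ∃ V : ℕ → Bool, HasRankConstr V m ∧ X = XV V := by
  classical
  obtain ⟨hTR1, hr2⟩ := hrank
  obtain ⟨x, hx, hTR⟩ := hTR1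
  have hXsub : IsSubshift X := hmin.1
  have hap := aperiodic_of_rank hmin n hn hr2 x hx
  have hzero : ∃ s₀ : ℤ, x s₀ = false := by
    by_contra h
    push_neg at h
    obtain ⟨s, hs⟩ := hap 1 (le_refl 1)
    apply hs
    have e1 : x s = true := by
      cases hxs : x s
      · exact absurd hxs (h s)
      · rfl
    have e2 : x (s + ((1 : ℕ) : ℤ)) = true := by
      cases hxs : x (s + ((1 : ℕ) : ℤ))
      · exact absurd hxs (h _)
      · rfl
    rw [e1, e2]
  obtain ⟨s₀, hs₀⟩ := hzero
  have hocc : OccursAtBi [false] x s₀ := by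
    intro k hk
    have hk0 : k = 0 := by simpa using hk
    subst hk0
    simpa using hs₀.symm
  obtain ⟨K, hK⟩ := uniform_occurrence hmin [false] x hx s₀ hocc
  have hgz : ∀ t : ℤ, ∃ r : ℕ, r ≤ 2 * K ∧ x (t + (r : ℤ)) = false := by
    intro t
    obtain ⟨q, hq, hqocc⟩ := hK (sh (t + (K : ℤ)) x) (sh_mem_of_subshift hXsub _ x hx)
    have habs := abs_le.1 hq
    have h1 := hqocc 0 (by simp)
    simp only [sh_apply] at h1
    refine ⟨(q + (K : ℤ)).toNat, by omega, ?_⟩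
    rw [show t + (((q + (K : ℤ)).toNat : ℕ) : ℤ) = q + (0 : ℤ) + (t + (K : ℤ)) by omega]
    simpa using h1.symm
  obtain ⟨lvl, hgapB, hsub, hmaxH⟩ := exists_lvl_chain hXsub x hx n hTR hap (2 * K)
  have hbig : ∀ i, ∀ s, s ∈ RetSet x (lvl i).P →
      (3 * ((2 * K : ℕ) : ℤ) + 2) < (gapAt x (lvl i).P s : ℤ) := by
    intro i s hs
    have h1 := (lvl i).gap_big s hs
    have h2 := hgapB i
    have h3 : 3 * (2 * K) + 3 + i ≤ (lvl i).gapB := h2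
    have h4 : (3 * (2 * K) + 3 + i : ℤ) ≤ ((lvl i).gapB : ℤ) := by exact_mod_cast h3
    push_cast at h4 ⊢
    omega
  have hRC := main_construction x (2 * K) hgz lvl hbig hsub hmaxH hgapB
  refine ⟨n + 1, by omega, fun k : ℕ => x (cfz x (2 * K) hgz 0 + (k : ℤ)), hRC, ?_⟩
  set c₀ := cfz x (2 * K) hgz 0 with hc₀
  apply Set.Subset.antisymm
  · -- X ⊆ XV V
    intro z hz u hu
    obtain ⟨q, hq⟩ := hu
    obtain ⟨K', hK'⟩ := uniform_occurrence hmin u z hz q hq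
    obtain ⟨q', hq', hq'occ⟩ := hK' (sh (c₀ + (K' : ℤ)) x) (sh_mem_of_subshift hXsub _ x hx)
    have habs := abs_le.1 hq'
    refine ⟨((K' : ℤ) + q').toNat, ?_⟩
    intro k hk
    have h1 := hq'occ k hk
    simp only [sh_apply] at h1
    rw [h1]
    show x ((q' + (k : ℤ)) + (c₀ + (K' : ℤ))) =
      x (c₀ + (((((K' : ℤ) + q').toNat + k : ℕ)) : ℤ))
    congr 1
    push_cast
    omega
  · -- XV V ⊆ X
    intro z hz
    apply mem_of_approx hmin.1.2.1 z
    intro N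
    have hocc2 : OccursInBi (seg z (-(N : ℤ)) (2 * N + 1)) z := by
      refine ⟨-(N : ℤ), ?_⟩
      intro k hk
      rw [seg_getD z _ (by simpa using hk)]
    obtain ⟨p, hp⟩ := hz _ hocc2
    refine ⟨sh (c₀ + (p : ℤ) + (N : ℤ)) x, sh_mem_of_subshift hXsub _ x hx, ?_⟩
    intro k hk
    have habs := abs_le.1 hk
    have hκlen : ((k + (N : ℤ)).toNat) < (seg z (-(N : ℤ)) (2 * N + 1)).length := by
      simp only [seg_length]
      omega
    have h1 := hp ((k + (N : ℤ)).toNat) (by simpa using hκlen)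
    rw [seg_getD z _ (by simpa using hκlen)] at h1
    have e1 : -(N : ℤ) + (((k + (N : ℤ)).toNat : ℕ) : ℤ) = k := by omega
    rw [e1] at h1
    show x (k + (c₀ + (p : ℤ) + (N : ℤ))) = z k
    rw [h1]
    congr 1
    push_cast
    omega

end SubshiftRank
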